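/- For the complete bipartite graph K_{n₁,n₂} with n₁ and n₂ both even, any bijective labeling π with labels {0,...,n₁+n₂−1} has cyclic bandwidth sum at least (n₁n₂² + n₁²n₂)/4. -/

import Mathlib

/-- Cyclic distance on labels in `{0,...,n-1}` (natural-number version). -/
def dCn (n a b : ℕ) : ℕ := min (Nat.dist a b) (n - Nat.dist a b)

/-- Cyclic bandwidth sum of a labeling `π` of the vertices of `G` by `{0,...,n-1}`. -/
noncomputable def CBS {V : Type*} [Fintype V] (n : ℕ) (G : SimpleGraph V)
    (π : V → Fin n) : ℕ :=
  have := Classical.decEq V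
  have : DecidableRel G.Adj := Classical.decRel _
  ∑ e ∈ G.edgeFinset,
    Sym2.lift ⟨fun u v => dCn n (π u) (π v),
      fun u v => by simp [dCn, Nat.dist_comm]⟩ e

lemma cbsL0 (m c : ℕ) (hm : 0 < m) (hc : c < 2*m) :
  ((Finset.range (2*m)).filter (fun j => ¬(((c + j) % (2*m) < m) ↔ j < m))).card
    = 2 * min c (2*m - c) := by
  have hset : (Finset.range (2*m)).filter (fun j => ¬(((c + j) % (2*m) < m) ↔ j < m))
      = (Finset.Ico (m - c) (min m (2*m - c))) ∪
        (Finset.Ico (max m (2*m - c)) (min (2*m) (3*m - c))) := by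
    ext j
    simp only [Finset.mem_filter, Finset.mem_range, Finset.mem_union, Finset.mem_Ico]
    rcases lt_or_ge j (2*m) with hj | hj
    · rcases lt_or_ge (c + j) (2*m) with h | h
      · rw [Nat.mod_eq_of_lt h]; omega
      · have h2 : c + j - 2*m < 2*m := by omega
        have h3 : (c + j) % (2*m) = c + j - 2*m := by
          rw [Nat.mod_eq_sub_mod h, Nat.mod_eq_of_lt h2]
        rw [h3]; omega
    · constructor
      · rintro ⟨h, -⟩; omega
      · intro h; exfalso; omega
  rw [hset, Finset.card_union_of_disjoint, Nat.card_Ico, Nat.card_Ico]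
  · omega
  · rw [Finset.disjoint_left]
    intro j hj hj'
    simp only [Finset.mem_Ico] at hj hj'
    omega

lemma cbsC1 (m k : ℕ) (hm : 0 < m) :
  ((Finset.range (2*m)).filter (fun j => (j + k) % (2*m) < m)).card = m := by
  have hk' : k % (2*m) < 2*m := Nat.mod_lt _ (by omega)
  have hset : (Finset.range (2*m)).filter (fun j => (j + k) % (2*m) < m)
      = (Finset.Ico 0 (m - k % (2*m))) ∪
        (Finset.Ico (2*m - k % (2*m)) (min (2*m) (3*m - k % (2*m)))) := by
    ext j
    simp only [Finset.mem_filter, Finset.mem_range, Finset.mem_union, Finset.mem_Ico]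
    have hmod : (j + k) % (2*m) = (j + k % (2*m)) % (2*m) := by
      conv_lhs => rw [Nat.add_mod]
      conv_rhs => rw [Nat.add_mod, Nat.mod_mod_of_dvd _ (dvd_refl _)]
    rcases lt_or_ge j (2*m) with hj | hj
    · rcases lt_or_ge (j + k % (2*m)) (2*m) with h | h
      · rw [hmod, Nat.mod_eq_of_lt h]; omega
      · have h2 : j + k % (2*m) - 2*m < 2*m := by omega
        have h3 : (j + k % (2*m)) % (2*m) = j + k % (2*m) - 2*m := by
          rw [Nat.mod_eq_sub_mod h, Nat.mod_eq_of_lt h2]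
        rw [hmod, h3]; omega
    · constructor
      · rintro ⟨h, -⟩; omega
      · intro h; exfalso; omega
  rw [hset, Finset.card_union_of_disjoint, Nat.card_Ico, Nat.card_Ico]
  · omega
  · rw [Finset.disjoint_left]
    intro j hj hj'
    simp only [Finset.mem_Ico] at hj hj'
    omega

lemma dCn_eq (m a b : ℕ) (hm : 0 < m) (ha : a < 2*m) (hb : b < 2*m) :
    dCn (2*m) a b = min ((a + (2*m - b)) % (2*m)) (2*m - (a + (2*m - b)) % (2*m)) := by
  rcases le_or_gt b a with h | h
  · have e : a + (2*m - b) = (a - b) + 2*m := by omega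
    rw [e, Nat.add_mod_right, Nat.mod_eq_of_lt (by omega)]
    simp [dCn, Nat.dist]; omega
  · rw [Nat.mod_eq_of_lt (by omega)]
    simp [dCn, Nat.dist]; omega

lemma cbsC2 (m a b : ℕ) (hm : 0 < m) (ha : a < 2*m) (hb : b < 2*m) :
    ((Finset.range (2*m)).filter
      (fun k => ¬(((a + k) % (2*m) < m) ↔ ((b + k) % (2*m) < m)))).card
    = 2 * dCn (2*m) a b := by
  set n := 2*m with hn
  set c := (a + (n - b)) % n with hc
  have hcn : c < n := Nat.mod_lt _ (by omega)
  have key : ∀ k, (c + (b + k) % n) % n = (a + k) % n := by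
    intro k
    rw [Nat.add_mod_mod, hc, Nat.mod_add_mod]
    have e : a + (n - b) + (b + k) = (a + k) + n := by omega
    rw [e, Nat.add_mod_right]
  have hcard : ((Finset.range n).filter
      (fun k => ¬(((a + k) % n < m) ↔ ((b + k) % n < m)))).card
      = ((Finset.range n).filter (fun j => ¬(((c + j) % n < m) ↔ j < m))).card := by
    apply Finset.card_nbij' (fun k => (b + k) % n) (fun x => ((n - b) + x) % n)
    · intro k hk
      simp only [Finset.mem_coe, Finset.mem_filter, Finset.mem_range] at hk ⊢
      refine ⟨Nat.mod_lt _ (by omega), ?_⟩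
      rw [key k]
      exact hk.2
    · intro x hx
      simp only [Finset.mem_coe, Finset.mem_filter, Finset.mem_range] at hx ⊢
      refine ⟨Nat.mod_lt _ (by omega), ?_⟩
      have h2 : (a + ((n - b) + x) % n) % n = (c + x) % n := by
        rw [Nat.add_mod_mod, hc, Nat.mod_add_mod, ← Nat.add_assoc]
      have h1 : (b + ((n - b) + x) % n) % n = x := by
        rw [Nat.add_mod_mod]
        have e : b + ((n - b) + x) = x + n := by omega
        rw [e, Nat.add_mod_right, Nat.mod_eq_of_lt hx.1]
      rw [h2, h1]
      exact hx.2
    · intro k hk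
      simp only [Finset.mem_coe, Finset.mem_filter, Finset.mem_range] at hk
      beta_reduce
      rw [Nat.add_mod_mod]
      have e : (n - b) + (b + k) = k + n := by omega
      rw [e, Nat.add_mod_right, Nat.mod_eq_of_lt hk.1]
    · intro x hx
      simp only [Finset.mem_coe, Finset.mem_filter, Finset.mem_range] at hx
      beta_reduce
      rw [Nat.add_mod_mod]
      have e : b + ((n - b) + x) = x + n := by omega
      rw [e, Nat.add_mod_right, Nat.mod_eq_of_lt hx.1]
  rw [hcard, cbsL0 m c hm hcn, dCn_eq m a b hm ha hb, ← hc, ← hn]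

lemma cbs_eq (n₁ n₂ n : ℕ) (π : (Fin n₁ ⊕ Fin n₂) → Fin n) :
    CBS n (completeBipartiteGraph (Fin n₁) (Fin n₂)) π
    = ∑ u : Fin n₁, ∑ v : Fin n₂, dCn n (π (Sum.inl u)) (π (Sum.inr v)) := by
  classical
  rw [CBS, ← Finset.sum_product']
  symm
  apply Finset.sum_bij (fun p _ => Sym2.mk (Sum.inl p.1) (Sum.inr p.2))
  · intro p _
    simp [SimpleGraph.mem_edgeFinset, SimpleGraph.mem_edgeSet]
  · intro p _ q _ h
    simp only [Sym2.eq, Sym2.rel_iff', Prod.mk.injEq, Sum.inl.injEq, Sum.inr.injEq,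
      reduceCtorEq, and_false, false_and, or_false, Prod.swap_prod_mk] at h
    exact Prod.ext h.1 h.2
  · intro e he
    simp only [SimpleGraph.mem_edgeFinset] at he
    induction e with
    | _ x y =>
      rw [SimpleGraph.mem_edgeSet] at he
      rcases x with u | u <;> rcases y with v | v <;>
        simp only [completeBipartiteGraph_adj] at he
      · simp at he
      · exact ⟨(u, v), Finset.mem_univ _, rfl⟩
      · exact ⟨(v, u), Finset.mem_univ _, Sym2.eq_swap⟩
      · simp at he
  · intro p _
    rw [Sym2.lift_mk]

lemma cut_bound (p q a₁ a₂ : ℕ) (h1 : a₁ ≤ 2*p) (h2 : a₂ ≤ 2*q) (h : a₁ + a₂ = p + q) :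
    (2*p) * (2*q) ≤ 2 * (a₁ * (2*q - a₂) + (2*p - a₁) * a₂) := by
  zify [h1, h2]
  nlinarith [sq_nonneg ((a₁ : ℤ) - p), sq_nonneg ((a₂ : ℤ) - q)]

theorem cbs_completeBipartite_lb (n₁ n₂ : ℕ) (h₁ : 2 ≤ n₁) (h₂ : 2 ≤ n₂)
    (he₁ : Even n₁) (he₂ : Even n₂)
    (π : (Fin n₁ ⊕ Fin n₂) ≃ Fin (n₁ + n₂)) :
    (n₁ * n₂ ^ 2 + n₁ ^ 2 * n₂) / 4 ≤
      CBS (n₁ + n₂) (completeBipartiteGraph (Fin n₁) (Fin n₂)) π := by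
  classical
  obtain ⟨p, hp⟩ := he₁
  obtain ⟨q, hq⟩ := he₂
  set m := p + q with hmdef
  have hn2m : n₁ + n₂ = 2 * m := by omega
  have hm : 0 < m := by omega
  have hCBS : CBS (n₁ + n₂) (completeBipartiteGraph (Fin n₁) (Fin n₂)) π
      = ∑ u : Fin n₁, ∑ v : Fin n₂,
          dCn (n₁ + n₂) ((π (Sum.inl u)) : ℕ) ((π (Sum.inr v)) : ℕ) :=
    cbs_eq n₁ n₂ (n₁ + n₂) π
  have E1 : 2 * ∑ u : Fin n₁, ∑ v : Fin n₂,
        dCn (n₁ + n₂) ((π (Sum.inl u)) : ℕ) ((π (Sum.inr v)) : ℕ)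
      = ∑ k ∈ Finset.range (n₁ + n₂), ∑ u : Fin n₁, ∑ v : Fin n₂,
          (if ¬((((π (Sum.inl u) : ℕ) + k) % (n₁ + n₂) < m)
              ↔ (((π (Sum.inr v) : ℕ) + k) % (n₁ + n₂) < m))
            then 1 else 0) := by
    rw [Finset.mul_sum]
    rw [Finset.sum_comm]
    apply Finset.sum_congr rfl
    intro u _
    rw [Finset.mul_sum, Finset.sum_comm]
    apply Finset.sum_congr rfl
    intro v _
    have hb1 := (π (Sum.inl u)).isLt
    have hb2 := (π (Sum.inr v)).isLt
    generalize ((π (Sum.inl u)) : ℕ) = a at hb1 ⊢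
    generalize ((π (Sum.inr v)) : ℕ) = b at hb2 ⊢
    rw [hn2m] at hb1 hb2 ⊢
    rw [← cbsC2 m a b hm hb1 hb2, Finset.card_filter]
  have E2 : ∀ k ∈ Finset.range (n₁ + n₂),
      n₁ * n₂ ≤ 2 * ∑ u : Fin n₁, ∑ v : Fin n₂,
          (if ¬((((π (Sum.inl u) : ℕ) + k) % (n₁ + n₂) < m)
              ↔ (((π (Sum.inr v) : ℕ) + k) % (n₁ + n₂) < m))
            then 1 else 0) := by
    intro k _
    set P : Fin n₁ → Prop := fun u => (((π (Sum.inl u) : ℕ)) + k) % (n₁ + n₂) < m with hP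
    set Q : Fin n₂ → Prop := fun v => (((π (Sum.inr v) : ℕ)) + k) % (n₁ + n₂) < m with hQ
    set a₁ := (Finset.univ.filter P).card with ha₁
    set a₂ := (Finset.univ.filter Q).card with ha₂
    have ha₁le : a₁ ≤ n₁ := le_trans (Finset.card_filter_le _ _) (by simp)
    have ha₂le : a₂ ≤ n₂ := le_trans (Finset.card_filter_le _ _) (by simp)
    have hsum12 : a₁ + a₂ = m := by
      have h1 : a₁ = ∑ u : Fin n₁, (if P u then 1 else 0) := Finset.card_filter _ _
      have h2 : a₂ = ∑ v : Fin n₂, (if Q v then 1 else 0) := Finset.card_filter _ _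
      have h3 : a₁ + a₂ = ∑ w : Fin n₁ ⊕ Fin n₂,
          (if ((π w : ℕ) + k) % (n₁ + n₂) < m then 1 else 0) := by
        rw [Fintype.sum_sum_type, h1, h2]
      have h4 : ∑ w : Fin n₁ ⊕ Fin n₂, (if ((π w : ℕ) + k) % (n₁ + n₂) < m then 1 else 0)
          = ∑ x : Fin (n₁ + n₂), (if ((x : ℕ) + k) % (n₁ + n₂) < m then 1 else 0) :=
        Equiv.sum_comp π (fun x : Fin (n₁ + n₂) =>
          if ((x : ℕ) + k) % (n₁ + n₂) < m then 1 else 0)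
      have h5 : ∑ x : Fin (n₁ + n₂), (if ((x : ℕ) + k) % (n₁ + n₂) < m then 1 else 0)
          = ∑ j ∈ Finset.range (n₁ + n₂), (if (j + k) % (n₁ + n₂) < m then 1 else 0) :=
        Fin.sum_univ_eq_sum_range (fun j => if (j + k) % (n₁ + n₂) < m then 1 else 0) _
      rw [h3, h4, h5, ← Finset.card_filter, hn2m]
      exact cbsC1 m k hm
    have inner : ∀ u : Fin n₁, ∑ v : Fin n₂, (if ¬(P u ↔ Q v) then 1 else 0)
        = if P u then n₂ - a₂ else a₂ := by
      intro u
      by_cases hu : P u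
      · simp only [hu, if_true, true_iff]
        have : ∑ v : Fin n₂, (if ¬ Q v then 1 else 0)
            = (Finset.univ.filter (fun v => ¬ Q v)).card := (Finset.card_filter _ _).symm
        rw [this]
        have := Finset.card_filter_add_card_filter_not
          (s := (Finset.univ : Finset (Fin n₂))) (p := Q)
        simp only [Finset.card_univ, Fintype.card_fin] at this
        omega
      · simp only [hu, if_false, false_iff, not_not]
        exact (Finset.card_filter _ _).symm
    calc n₁ * n₂ = (2*p) * (2*q) := by rw [hp, hq]; ring_nf
      _ ≤ 2 * (a₁ * (2*q - a₂) + (2*p - a₁) * a₂) :=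
          cut_bound p q a₁ a₂ (by omega) (by omega) (by omega)
      _ = 2 * (a₁ * (n₂ - a₂) + (n₁ - a₁) * a₂) := by rw [hp, hq]; ring_nf
      _ = 2 * ∑ u : Fin n₁, ∑ v : Fin n₂, (if ¬(P u ↔ Q v) then 1 else 0) := by
          congr 1
          rw [Finset.sum_congr rfl (fun u _ => inner u), Finset.sum_ite,
            Finset.sum_const, Finset.sum_const, smul_eq_mul, smul_eq_mul]
          have := Finset.card_filter_add_card_filter_not
            (s := (Finset.univ : Finset (Fin n₁))) (p := P)
          simp only [Finset.card_univ, Fintype.card_fin] at this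
          rw [← ha₁]
          have hneg : (Finset.univ.filter (fun u => ¬ P u)).card = n₁ - a₁ := by omega
          rw [hneg]
      _ = 2 * ∑ u : Fin n₁, ∑ v : Fin n₂,
          (if ¬((((π (Sum.inl u) : ℕ) + k) % (n₁ + n₂) < m)
              ↔ (((π (Sum.inr v) : ℕ) + k) % (n₁ + n₂) < m))
            then 1 else 0) := rfl
  have E3 : (n₁ + n₂) * (n₁ * n₂)
      ≤ 4 * CBS (n₁ + n₂) (completeBipartiteGraph (Fin n₁) (Fin n₂)) π := by
    calc (n₁ + n₂) * (n₁ * n₂) = ∑ _k ∈ Finset.range (n₁ + n₂), n₁ * n₂ := by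
          rw [Finset.sum_const, Finset.card_range, smul_eq_mul]
      _ ≤ ∑ k ∈ Finset.range (n₁ + n₂), 2 * ∑ u : Fin n₁, ∑ v : Fin n₂,
          (if ¬((((π (Sum.inl u) : ℕ) + k) % (n₁ + n₂) < m)
              ↔ (((π (Sum.inr v) : ℕ) + k) % (n₁ + n₂) < m))
            then 1 else 0) := Finset.sum_le_sum E2
      _ = 2 * ∑ k ∈ Finset.range (n₁ + n₂), ∑ u : Fin n₁, ∑ v : Fin n₂,
          (if ¬((((π (Sum.inl u) : ℕ) + k) % (n₁ + n₂) < m)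
              ↔ (((π (Sum.inr v) : ℕ) + k) % (n₁ + n₂) < m))
            then 1 else 0) := (Finset.mul_sum _ _ _).symm
      _ = 2 * (2 * ∑ u : Fin n₁, ∑ v : Fin n₂,
            dCn (n₁ + n₂) ((π (Sum.inl u)) : ℕ) ((π (Sum.inr v)) : ℕ)) := by rw [E1]
      _ = 4 * CBS (n₁ + n₂) (completeBipartiteGraph (Fin n₁) (Fin n₂)) π := by
          rw [hCBS]; ring
  have hrw : n₁ * n₂ ^ 2 + n₁ ^ 2 * n₂ = (n₁ + n₂) * (n₁ * n₂) := by ring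
  rw [hrw]
  calc (n₁ + n₂) * (n₁ * n₂) / 4
      ≤ 4 * CBS (n₁ + n₂) (completeBipartiteGraph (Fin n₁) (Fin n₂)) π / 4 :=
        Nat.div_le_div_right E3
    _ = CBS (n₁ + n₂) (completeBipartiteGraph (Fin n₁) (Fin n₂)) π := by
        rw [Nat.mul_div_cancel_left _ (by norm_num)]
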